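/- Let B be a commutative monoid such that s(B) is a canonical hypergroup under the given hyperlaw. Then B satisfies the splitting condition: for all x, y, u, v with x + y = u + v there exists z with (x + z = u and z + v = y) or (x = u + z and v = z + y). -/

import Mathlib

/-- The splitting condition on a commutative monoid. -/
def SplitCond (M : Type*) [AddCommMonoid M] : Prop :=
  ∀ x y u v : M, x + y = u + v →
    ∃ z : M, (x + z = u ∧ z + v = y) ∨ (x = u + z ∧ v = z + y)

/-- The basic identification `(a, 1) ∼ (b, -1)` when `a + b = 0` (true = +1, false = -1). -/
def symRel (M : Type*) [AddCommMonoid M] : M × Bool → M × Bool → Prop :=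
  fun p q => p.2 ≠ q.2 ∧ p.1 + q.1 = 0

/-- The symmetrization `s(M)` as the quotient of `M × {±1}` by the generated equivalence. -/
def SymHG (M : Type*) [AddCommMonoid M] := Quot (symRel M)

/-- The hyperlaw on representatives. -/
def hsum {M : Type*} [AddCommMonoid M] : M × Bool → M × Bool → Set (M × Bool)
  | (a, true), (b, true) => {(a + b, true)}
  | (a, false), (b, false) => {(a + b, false)}
  | (a, true), (b, false) =>
      {r | (∃ z, r = (z, true) ∧ z + b = a) ∨ (∃ z, r = (z, false) ∧ z + a = b)}
  | (a, false), (b, true) =>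
      {r | (∃ z, r = (z, true) ∧ z + a = b) ∨ (∃ z, r = (z, false) ∧ z + b = a)}

/-- The induced hypersum on the quotient `s(M)` (union over representatives). -/
def hadd {M : Type*} [AddCommMonoid M] (x y : SymHG M) : Set (SymHG M) :=
  {c | ∃ p q r, Quot.mk (symRel M) p = x ∧ Quot.mk (symRel M) q = y ∧
      Quot.mk (symRel M) r = c ∧ r ∈ hsum p q}

/-- The neutral element of `s(M)`. -/
def szero (M : Type*) [AddCommMonoid M] : SymHG M := Quot.mk (symRel M) (0, true)

/-- `s(M)` is a canonical hypergroup: commutativity, associativity, neutral element,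
unique inverses, and reversibility (phrased via the inverse: `x ∈ y + z → z ∈ x + (-y)`). -/
def IsCanonicalHypergroup (M : Type*) [AddCommMonoid M] : Prop :=
  (∀ x y : SymHG M, hadd x y = hadd y x) ∧
  (∀ x y z : SymHG M, (⋃ w ∈ hadd x y, hadd w z) = ⋃ w ∈ hadd y z, hadd x w) ∧
  (∀ x : SymHG M, hadd (szero M) x = {x}) ∧
  (∀ x : SymHG M, ∃! y : SymHG M, szero M ∈ hadd x y) ∧
  (∀ x y z w : SymHG M, x ∈ hadd y z → szero M ∈ hadd y w → z ∈ hadd x w)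

/-- Characterization of equality in the quotient: two representatives are identified
iff they are equal or are opposite-sign inverses of each other. -/
lemma symQuot_eq {M : Type*} [AddCommMonoid M] {p q : M × Bool}
    (h : Quot.mk (symRel M) p = Quot.mk (symRel M) q) :
    p = q ∨ (p.2 ≠ q.2 ∧ p.1 + q.1 = 0) := by
  have h' := Quot.eq.mp h
  clear h
  induction h' with
  | rel a b hab => exact Or.inr hab
  | refl a => exact Or.inl rfl
  | symm a b _ ih =>
      rcases ih with rfl | ⟨hne, hz⟩
      · exact Or.inl rfl
      · exact Or.inr ⟨hne.symm, by rwa [add_comm]⟩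
  | trans a b c _ _ ih1 ih2 =>
      rcases ih1 with rfl | ⟨hne1, hz1⟩
      · exact ih2
      · rcases ih2 with rfl | ⟨hne2, hz2⟩
        · exact Or.inr ⟨hne1, hz1⟩
        · left
          have hb : a.2 = c.2 := by
            cases ha : a.2 <;> cases hbb : b.2 <;> cases hc : c.2 <;> simp_all
          have h1 : a.1 = c.1 := by
            calc a.1 = a.1 + (b.1 + c.1) := by rw [hz2, add_zero]
            _ = (a.1 + b.1) + c.1 := (add_assoc _ _ _).symm
            _ = c.1 := by rw [hz1, zero_add]
          exact Prod.ext h1 hb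

/-- If any of the four elements is invertible, the splitting conclusion holds directly. -/
lemma split_of_inv {M : Type*} [AddCommMonoid M] {x y u v : M} (hxy : x + y = u + v)
    (hinv : (∃ w, x + w = 0) ∨ (∃ w, y + w = 0) ∨ (∃ w, u + w = 0) ∨ (∃ w, v + w = 0)) :
    ∃ z : M, (x + z = u ∧ z + v = y) ∨ (x = u + z ∧ v = z + y) := by
  rcases hinv with ⟨w, hw⟩ | ⟨w, hw⟩ | ⟨w, hw⟩ | ⟨w, hw⟩
  · refine ⟨w + u, Or.inl ⟨?_, ?_⟩⟩
    · calc x + (w + u) = (x + w) + u := (add_assoc _ _ _).symm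
      _ = u := by rw [hw, zero_add]
    · calc (w + u) + v = w + (u + v) := add_assoc _ _ _
      _ = w + (x + y) := by rw [hxy]
      _ = (x + w) + y := by rw [← add_assoc, add_comm w x]
      _ = y := by rw [hw, zero_add]
  · refine ⟨v + w, Or.inr ⟨?_, ?_⟩⟩
    · calc x = (x + y) + w := by rw [add_assoc, hw, add_zero]
      _ = (u + v) + w := by rw [hxy]
      _ = u + (v + w) := add_assoc _ _ _
    · calc v = v + (y + w) := by rw [hw, add_zero]
      _ = (v + w) + y := by rw [add_comm y w, ← add_assoc]
  · refine ⟨w + x, Or.inr ⟨?_, ?_⟩⟩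
    · calc x = (u + w) + x := by rw [hw, zero_add]
      _ = u + (w + x) := add_assoc _ _ _
    · calc v = (u + w) + v := by rw [hw, zero_add]
      _ = w + (u + v) := by rw [add_comm u w, add_assoc]
      _ = w + (x + y) := by rw [hxy]
      _ = (w + x) + y := (add_assoc _ _ _).symm
  · refine ⟨y + w, Or.inl ⟨?_, ?_⟩⟩
    · calc x + (y + w) = (x + y) + w := (add_assoc _ _ _).symm
      _ = (u + v) + w := by rw [hxy]
      _ = u + (v + w) := add_assoc _ _ _
      _ = u := by rw [hw, add_zero]
    · calc (y + w) + v = y + (w + v) := add_assoc _ _ _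
      _ = y + 0 := by rw [add_comm w v, hw]
      _ = y := add_zero y

theorem hypergroup_implies_splitCond {M : Type*} [AddCommMonoid M]
    (h : IsCanonicalHypergroup M) : SplitCond M := by
  intro x y u v hxy
  obtain ⟨-, hassoc, -⟩ := h
  have key := hassoc (Quot.mk _ (x, true)) (Quot.mk _ (y, true)) (Quot.mk _ (v, false))
  -- (u, true) is in the left-hand union
  have hmem : Quot.mk (symRel M) (u, true) ∈
      ⋃ w ∈ hadd (Quot.mk (symRel M) (x, true)) (Quot.mk (symRel M) (y, true)),
        hadd w (Quot.mk (symRel M) (v, false)) := by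
    refine Set.mem_iUnion₂.mpr ?_
    refine ⟨Quot.mk _ (x + y, true), ?_, ?_⟩
    · exact ⟨(x, true), (y, true), (x + y, true), rfl, rfl, rfl, rfl⟩
    · refine ⟨(x + y, true), (v, false), (u, true), rfl, rfl, rfl, ?_⟩
      exact Or.inl ⟨u, rfl, hxy.symm⟩
  rw [key] at hmem
  replace hmem := Set.mem_iUnion₂.mp hmem
  obtain ⟨W, hW, hU⟩ := hmem
  obtain ⟨p, q, r, hp, hq, hr, hrmem⟩ := hW
  obtain ⟨p', q', r', hp', hq', hr', hrmem'⟩ := hU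
  -- analyze the representative p of (y, true)
  rcases symQuot_eq hp with rfl | ⟨-, hyinv⟩
  swap
  · exact split_of_inv hxy (Or.inr (Or.inl ⟨p.1, by rwa [add_comm]⟩))
  -- analyze the representative q of (v, false)
  rcases symQuot_eq hq with rfl | ⟨-, hvinv⟩
  swap
  · exact split_of_inv hxy (Or.inr (Or.inr (Or.inr ⟨q.1, by rwa [add_comm]⟩)))
  -- analyze the representative p' of (x, true)
  rcases symQuot_eq hp' with rfl | ⟨-, hxinv⟩
  swap
  · exact split_of_inv hxy (Or.inl ⟨p'.1, by rwa [add_comm]⟩)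
  -- analyze the representative r' of (u, true)
  rcases symQuot_eq hr' with hru | ⟨-, huinv⟩
  swap
  · exact split_of_inv hxy (Or.inr (Or.inr (Or.inl ⟨r'.1, by rwa [add_comm]⟩)))
  -- relation between q' and r
  have hq'r := symQuot_eq (hq'.trans hr.symm)
  -- r ∈ hsum (y,true) (v,false)
  rcases hrmem with ⟨z, rfl, hz⟩ | ⟨z, rfl, hz⟩
  · -- r = (z, true), z + v = y
    rcases hq'r with rfl | ⟨hne, hzb⟩
    · -- q' = (z, true): r' = (x + z, true)
      simp only [hsum, Set.mem_singleton_iff] at hrmem'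
      subst hrmem'
      rw [Prod.ext_iff] at hru
      exact ⟨z, Or.inl ⟨hru.1, hz⟩⟩
    · -- q' = (b, false) with b + z = 0
      obtain ⟨b, s⟩ := q'
      simp only [ne_eq] at hne
      have hs : s = false := by
        cases s
        · rfl
        · exact absurd rfl hne
      subst hs
      simp only at hzb
      rcases hrmem' with ⟨w, rfl, hw⟩ | ⟨w, rfl, hw⟩
      · -- r' = (w, true), w + b = x ; r' = (u, true) so w = u
        rw [Prod.ext_iff] at hru
        obtain ⟨hru1, -⟩ := hru
        subst hru1
        refine ⟨z, Or.inl ⟨?_, hz⟩⟩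
        calc x + z = (w + b) + z := by rw [hw]
        _ = w + (b + z) := add_assoc _ _ _
        _ = w := by rw [hzb, add_zero]
      · simp at hru
  · -- r = (z, false), z + y = v
    rcases hq'r with rfl | ⟨hne, hzb⟩
    · -- q' = (z, false)
      rcases hrmem' with ⟨w, rfl, hw⟩ | ⟨w, rfl, hw⟩
      · -- r' = (w, true), w + z = x ; w = u
        rw [Prod.ext_iff] at hru
        obtain ⟨hru1, -⟩ := hru
        subst hru1
        exact ⟨z, Or.inr ⟨hw.symm, hz.symm⟩⟩
      · simp at hru
    · -- q' = (b, true), b + z = 0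
      obtain ⟨b, s⟩ := q'
      simp only [ne_eq] at hne
      have hs : s = true := by
        cases s
        · exact absurd rfl hne
        · rfl
      subst hs
      simp only at hzb
      -- r' ∈ hsum (x,true) (b,true) = {(x+b, true)}
      simp only [hsum, Set.mem_singleton_iff] at hrmem'
      subst hrmem'
      rw [Prod.ext_iff] at hru
      obtain ⟨hru1, -⟩ := hru
      have hru2 : x + b = u := hru1
      refine ⟨z, Or.inr ⟨?_, hz.symm⟩⟩
      calc x = x + (b + z) := by rw [hzb, add_zero]
      _ = (x + b) + z := (add_assoc _ _ _).symm
      _ = u + z := by rw [hru2]
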